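/- Let x(k) = Σ_{m=0}^{r-1} a_m λ_m^k with distinct nonzero λ_m and with the vectors a_0,...,a_{r-1} ∈ ℂ^n linearly independent. For l ≥ r and s ≥ l, the nl × s block Hankel matrix H with (i, p)-block x(k+i+p) (i = 0,...,l−1; p = 0,...,s−1) has rank exactly r. -/

import Mathlib

/-- The block Hankel matrix of a signal with `r` exponential modes with linearly
independent mode vectors has rank exactly `r` when `l ≥ r` and `s ≥ l`. -/
theorem stmt7 (n r l s : ℕ) (hl : r ≤ l) (hs : l ≤ s) (k : ℤ)
    (Λ : Fin r → ℂ) (hΛ : ∀ m, Λ m ≠ 0) (hd : Function.Injective Λ)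
    (a : Fin r → Fin n → ℂ) (hli : LinearIndependent ℂ a)
    (x : ℤ → Fin n → ℂ)
    (hx : ∀ (k' : ℤ) (i : Fin n), x k' i = ∑ m, a m i * Λ m ^ k')
    (H : Matrix (Fin l × Fin n) (Fin s) ℂ)
    (hH : ∀ (i : Fin l) (j : Fin n) (p : Fin s),
      H (i, j) p = x (k + (i : ℕ) + (p : ℕ)) j) :
    H.rank = r := by
  classical
  set A : Matrix (Fin l × Fin n) (Fin r) ℂ :=
    fun q m => a m q.2 * Λ m ^ (k + (q.1 : ℕ)) with hA
  set V : Matrix (Fin r) (Fin s) ℂ := fun m p => Λ m ^ (p : ℕ) with hV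
  -- H = A * V
  have hHAV : H = A * V := by
    ext ⟨i, j⟩ p
    rw [hH, hx, Matrix.mul_apply]
    refine Finset.sum_congr rfl fun m _ => ?_
    have : Λ m ^ (k + (i : ℕ) + (p : ℕ)) =
        Λ m ^ (k + (i : ℕ)) * Λ m ^ (p : ℕ) := by
      rw [zpow_add₀ (hΛ m), zpow_natCast]
    rw [this, hA, hV]
    ring
  -- A has injective mulVecLin
  have hAinj : Function.Injective A.mulVecLin := by
    rw [← LinearMap.ker_eq_bot, LinearMap.ker_eq_bot']
    intro c hc
    rcases Nat.eq_zero_or_pos r with hr | hr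
    · funext m; exact absurd m.2 (by omega)
    have hi0 : (0 : ℕ) < l := lt_of_lt_of_le hr hl
    have key : ∀ m, c m * Λ m ^ k = 0 := by
      apply Fintype.linearIndependent_iff.mp hli
      funext j
      have := congrFun hc (⟨0, hi0⟩, j)
      rw [Matrix.mulVecLin_apply] at this
      simpa [Matrix.mulVecLin_apply, Matrix.mulVec, dotProduct, hA,
        mul_comm, mul_assoc, mul_left_comm] using this
    funext m
    have := key m
    have hne : Λ m ^ k ≠ 0 := zpow_ne_zero _ (hΛ m)
    exact (mul_eq_zero.mp this).resolve_right hne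
  -- Vᵀ has injective mulVecLin
  have hVinj : Function.Injective V.transpose.mulVecLin := by
    rw [← LinearMap.ker_eq_bot, LinearMap.ker_eq_bot']
    intro c hc
    have hrs : r ≤ s := hl.trans hs
    have hdet : (Matrix.vandermonde Λ).transpose.det ≠ 0 := by
      rw [Matrix.det_transpose]
      exact Matrix.det_vandermonde_ne_zero_iff.mpr hd
    apply Matrix.eq_zero_of_mulVec_eq_zero hdet
    funext p
    have := congrFun hc ⟨(p : ℕ), lt_of_lt_of_le p.2 hrs⟩
    simpa [Matrix.mulVecLin_apply, Matrix.mulVec, Matrix.vecMul, Matrix.transpose_apply, Matrix.transpose, dotProduct,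
      Matrix.vandermonde, hV, mul_comm] using this
  -- rank H = rank V
  have h1 : H.rank = V.rank := by
    rw [hHAV, Matrix.rank, Matrix.mulVecLin_mul, LinearMap.range_comp, Matrix.rank]
    exact (Submodule.equivMapOfInjective _ hAinj _).finrank_eq.symm
  -- rank V = r
  have h2 : V.rank = r := by
    rw [← Matrix.rank_transpose, Matrix.rank,
      LinearMap.finrank_range_of_inj hVinj]
    simp [Module.finrank_pi]
  rw [h1, h2]
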